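/- Let T be a tree on n vertices with a perfect matching given by the edge set M, where n/2 is even, and suppose T admits a strong graceful labelling. Then the permutation g₂ = (0 n−2)(1 n−1)⋯(n/2−2 n/2)(n/2−1 n/2+1) of {0, 1, …, n − 1} — that is, the permutation sending each even label 2k to n − 2 − 2k and each odd label 2k+1 to n − 1 − 2k — is a generalised strongly graceful permutation of T. -/
import Mathlib


open SimpleGraph

/-- A graceful labelling of a graph `G` with `m` edges: an injective function
`f` from the vertices into `{0, 1, …, m}` such that the induced edge labels
`|f u − f v|` are pairwise distinct over the edges. -/
def IsGracefulLabeling {V : Type} (G : SimpleGraph V) (f : V → ℕ) : Prop :=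
  Function.Injective f ∧ (∀ v, f v ≤ G.edgeSet.ncard) ∧
  ∀ u v x y : V, G.Adj u v → G.Adj x y →
    Nat.dist (f u) (f v) = Nat.dist (f x) (f y) → s(u, v) = s(x, y)

/-- A strong graceful labelling of `G` on `n` vertices with respect to a matching `M`:
a graceful labelling such that `f x + f y = n - 1` for every edge `xy ∈ M`. -/
def IsStrongGracefulLabeling {V : Type} [Fintype V] (G : SimpleGraph V)
    (M : G.Subgraph) (f : V → ℕ) : Prop :=
  IsGracefulLabeling G f ∧ ∀ x y : V, M.Adj x y → f x + f y = Fintype.card V - 1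


/-- `g` is a generalised strongly graceful permutation of `G` (with matching `M`):
`g` permutes `{0, …, n-1}` and for every strong graceful labelling `f`,
the labelling `g ∘ f` is again a strong graceful labelling. -/
def IsGenStronglyGracefulPerm {V : Type} [Fintype V] (G : SimpleGraph V)
    (M : G.Subgraph) (g : ℕ → ℕ) : Prop :=
  Set.BijOn g (Set.Iio (Fintype.card V)) (Set.Iio (Fintype.card V)) ∧
  ∀ f : V → ℕ, IsStrongGracefulLabeling G M f → IsStrongGracefulLabeling G M (g ∘ f)


private lemma g2val (n b : ℕ) :
    (b % 2 = 0 ∧ (if Even b then n - 2 - b else n - b) = n - 2 - b)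
    ∨ (b % 2 = 1 ∧ (if Even b then n - 2 - b else n - b) = n - b) := by
  rcases Nat.even_or_odd b with h | h
  · exact Or.inl ⟨Nat.even_iff.mp h, if_pos h⟩
  · have hb := Nat.odd_iff.mp h
    exact Or.inr ⟨hb, if_neg (by rw [Nat.even_iff]; omega)⟩

private lemma g2core (n a c : ℕ) (h4 : n % 4 = 0) (hn : 4 ≤ n)
    (ha : a ≤ n - 1) (hc : c ≤ n - 1) (pa : a % 2 = 0) (pc : c % 2 = 0)
    (h : Nat.dist (n - 2 - a) (a + 1) = Nat.dist (n - 2 - c) (c + 1)) : a = c := by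
  simp only [Nat.dist] at h; omega

private lemma g2L1 (n a b c d : ℕ) (h4 : n % 4 = 0) (hn : 4 ≤ n)
    (hab : a + b = n - 1) (hcd : c + d = n - 1)
    (hd : Nat.dist (if Even a then n - 2 - a else n - a) (if Even b then n - 2 - b else n - b)
        = Nat.dist (if Even c then n - 2 - c else n - c) (if Even d then n - 2 - d else n - d)) :
    (a = c ∧ b = d) ∨ (a = d ∧ b = c) := by
  have norm : ∀ x y : ℕ, x + y = n - 1 → x % 2 = 0 →
      Nat.dist (if Even x then n - 2 - x else n - x) (if Even y then n - 2 - y else n - y)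
        = Nat.dist (n - 2 - x) (x + 1) := by
    intro x y hxy px
    rcases g2val n x with ⟨p1, q1⟩ | ⟨p1, q1⟩ <;> rcases g2val n y with ⟨p2, q2⟩ | ⟨p2, q2⟩ <;>
      rw [q1, q2] <;> simp only [Nat.dist] <;> omega
  have norm2 : ∀ x y : ℕ, x + y = n - 1 → x % 2 = 1 →
      Nat.dist (if Even x then n - 2 - x else n - x) (if Even y then n - 2 - y else n - y)
        = Nat.dist (n - 2 - y) (y + 1) := by
    intro x y hxy px
    rw [Nat.dist_comm]
    exact norm y x (by omega) (by omega)
  rcases g2val n a with ⟨p1, -⟩ | ⟨p1, -⟩ <;> rcases g2val n c with ⟨p3, -⟩ | ⟨p3, -⟩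
  · rw [norm a b hab p1, norm c d hcd p3] at hd
    have := g2core n a c h4 hn (by omega) (by omega) p1 p3 hd
    exact Or.inl ⟨this, by omega⟩
  · rw [norm a b hab p1, norm2 c d hcd p3] at hd
    have := g2core n a d h4 hn (by omega) (by omega) p1 (by omega) hd
    exact Or.inr ⟨this, by omega⟩
  · rw [norm2 a b hab p1, norm c d hcd p3] at hd
    have := g2core n b c h4 hn (by omega) (by omega) (by omega) p3 hd
    exact Or.inr ⟨by omega, this⟩
  · rw [norm2 a b hab p1, norm2 c d hcd p3] at hd
    have := g2core n b d h4 hn (by omega) (by omega) (by omega) (by omega) hd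
    exact Or.inl ⟨by omega, this⟩

private lemma g2L2 (n a b c d : ℕ) (h4 : n % 4 = 0) (hn : 4 ≤ n)
    (hab : a + b = n - 1) (hc : c < n) (hd' : d < n) (hp : c % 2 = d % 2) :
    Nat.dist (if Even a then n - 2 - a else n - a) (if Even b then n - 2 - b else n - b)
      ≠ Nat.dist (if Even c then n - 2 - c else n - c) (if Even d then n - 2 - d else n - d) := by
  rcases g2val n a with ⟨p1, q1⟩ | ⟨p1, q1⟩ <;>
    rcases g2val n b with ⟨p2, q2⟩ | ⟨p2, q2⟩ <;>
      rcases g2val n c with ⟨p3, q3⟩ | ⟨p3, q3⟩ <;>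
        rcases g2val n d with ⟨p4, q4⟩ | ⟨p4, q4⟩ <;>
          rw [q1, q2, q3, q4] <;> simp only [Nat.dist] <;> omega

private lemma g2L3 (n a b : ℕ) (h4 : n % 4 = 0) (ha : a < n) (hb : b < n) (hp : a % 2 = b % 2) :
    Nat.dist (if Even a then n - 2 - a else n - a) (if Even b then n - 2 - b else n - b)
      = Nat.dist a b := by
  rcases g2val n a with ⟨p1, q1⟩ | ⟨p1, q1⟩ <;>
    rcases g2val n b with ⟨p2, q2⟩ | ⟨p2, q2⟩ <;>
      rw [q1, q2] <;> simp only [Nat.dist] <;> omega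

private lemma g2L4 (n a b : ℕ) (h4 : n % 4 = 0) (hn : 4 ≤ n) (hab : a + b = n - 1) :
    (if Even a then n - 2 - a else n - a) + (if Even b then n - 2 - b else n - b) = n - 1 := by
  rcases g2val n a with ⟨p1, q1⟩ | ⟨p1, q1⟩ <;>
    rcases g2val n b with ⟨p2, q2⟩ | ⟨p2, q2⟩ <;> rw [q1, q2] <;> omega

private lemma g2L5 (n a b : ℕ) (h4 : n % 4 = 0) (ha : a < n) (hb : b < n)
    (heq : (if Even a then n - 2 - a else n - a) = (if Even b then n - 2 - b else n - b)) :
    a = b := by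
  rcases g2val n a with ⟨p1, q1⟩ | ⟨p1, q1⟩ <;>
    rcases g2val n b with ⟨p2, q2⟩ | ⟨p2, q2⟩ <;> rw [q1, q2] at heq <;> omega

private lemma g2L6 (n a : ℕ) (h4 : n % 4 = 0) (hn : 4 ≤ n) (ha : a < n) :
    (if Even a then n - 2 - a else n - a) < n := by
  rcases g2val n a with ⟨p1, q1⟩ | ⟨p1, q1⟩ <;> rw [q1] <;> omega

/-- When `n / 2` is even, the permutation `g₂ = (0 n-2)(1 n-1)⋯(n/2-2 n/2)(n/2-1 n/2+1)`,
sending each even label `b` to `n - 2 - b` and each odd label `b` to `n - b`, is a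
generalised strongly graceful permutation of a strongly graceful tree `T` on `n` vertices. -/
theorem g2_genStronglyGracefulPerm_of_even {V : Type} [Fintype V] (G : SimpleGraph V)
    (hT : G.IsTree) (hhalf : Even (Fintype.card V / 2))
    (M : G.Subgraph) (hM : M.IsPerfectMatching)
    (hex : ∃ f : V → ℕ, IsStrongGracefulLabeling G M f) :
    IsGenStronglyGracefulPerm G M
      (fun b => if Even b then Fintype.card V - 2 - b else Fintype.card V - b) := by
  classical
  have hne : Nonempty V := hT.isConnected.nonempty
  have hcard_even : Even (Fintype.card V) := hM.even_card
  set n := Fintype.card V with hn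
  have h4 : n % 4 = 0 := by
    obtain ⟨k, hk⟩ := hcard_even
    obtain ⟨j, hj⟩ := hhalf
    omega
  have hn4 : 4 ≤ n := by
    have : 0 < n := Fintype.card_pos
    omega
  have hfin : Fintype ↥G.edgeSet := Fintype.ofFinite _
  have hedges : G.edgeSet.ncard = n - 1 := by
    have h := hT.card_edgeFinset
    have h2 : G.edgeSet.toFinset = G.edgeFinset := rfl
    rw [Set.ncard_eq_toFinset_card', h2, hn]
    omega
  constructor
  · -- BijOn
    simp only [← hn]
    refine ⟨?_, ?_, ?_⟩
    · intro b hb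
      simp only [Set.mem_Iio] at hb ⊢
      exact g2L6 n b h4 hn4 hb
    · intro a ha b hb hab
      simp only [Set.mem_Iio] at ha hb
      simp only at hab
      exact g2L5 n a b h4 ha hb hab
    · intro c hc
      simp only [Set.mem_Iio] at hc
      by_cases hc2 : c % 2 = 0
      · refine ⟨n - 2 - c, by simp only [Set.mem_Iio]; omega, ?_⟩
        simp only
        rcases g2val n (n - 2 - c) with ⟨p, q⟩ | ⟨p, q⟩ <;> rw [q] <;> omega
      · refine ⟨n - c, by simp only [Set.mem_Iio]; omega, ?_⟩
        simp only
        rcases g2val n (n - c) with ⟨p, q⟩ | ⟨p, q⟩ <;> rw [q] <;> omega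
  · intro f hf
    obtain ⟨⟨finj, fbd, fdist⟩, fmatch⟩ := hf
    simp only [← hn] at fmatch
    have fbd' : ∀ v, f v < n := by
      intro v
      have := fbd v
      rw [hedges] at this
      omega
    have fsurj : ∀ a, a < n → ∃ v, f v = a := by
      intro a ha
      have himg : Finset.image f Finset.univ = Finset.range n := by
        apply Finset.eq_of_subset_of_card_le
        · intro c hc
          simp only [Finset.mem_image] at hc
          obtain ⟨v, -, rfl⟩ := hc
          exact Finset.mem_range.mpr (fbd' v)
        · rw [Finset.card_range, Finset.card_image_of_injective _ finj,
            Finset.card_univ, ← hn]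
      have : a ∈ Finset.image f Finset.univ := himg ▸ Finset.mem_range.mpr ha
      simpa using this
    have hpartner : ∀ v : V, ∃ w, M.Adj v w := fun v => (hM.1 (hM.2 v)).exists
    -- non-matching edges join vertices of equal parity
    have hNM : ∀ u v, G.Adj u v → ¬ M.Adj u v → f u % 2 = f v % 2 := by
      intro u v huv hMuv
      by_contra hpar
      have hu := fbd' u
      have hv := fbd' v
      set ℓ := Nat.dist (f u) (f v) with hℓ
      have hℓ' : ℓ = f u - f v + (f v - f u) := rfl
      have hℓodd : ℓ % 2 = 1 := by omega
      have hℓle : ℓ ≤ n - 1 := by omega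
      obtain ⟨a, hae, halt, hda⟩ :
          ∃ a, a % 2 = 0 ∧ a < n ∧ Nat.dist a (n - 1 - a) = ℓ := by
        by_cases h34 : ℓ % 4 = 3
        · exact ⟨(n - 1 - ℓ) / 2, by omega, by omega, by simp only [Nat.dist]; omega⟩
        · exact ⟨(n - 1 + ℓ) / 2, by omega, by omega, by simp only [Nat.dist]; omega⟩
      obtain ⟨x, hx⟩ := fsurj a halt
      obtain ⟨y, hxy⟩ := hpartner x
      have hsum := fmatch x y hxy
      have hfy : f y = n - 1 - a := by omega
      have hde : Nat.dist (f u) (f v) = Nat.dist (f x) (f y) := by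
        rw [hx, hfy, hda]
      have := fdist u v x y huv hxy.adj_sub hde
      rw [Sym2.eq_iff] at this
      rcases this with ⟨rfl, rfl⟩ | ⟨rfl, rfl⟩
      · exact hMuv hxy
      · exact hMuv hxy.symm
    refine ⟨⟨?_, ?_, ?_⟩, ?_⟩
    · -- injective
      intro v w hvw
      simp only [Function.comp_apply] at hvw
      exact finj (g2L5 n (f v) (f w) h4 (fbd' v) (fbd' w) hvw)
    · -- bound
      intro v
      simp only [Function.comp_apply]
      rw [hedges]
      have := g2L6 n (f v) h4 hn4 (fbd' v)
      omega
    · -- distinct edge labels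
      intro u v x y huv hxy hd
      simp only [Function.comp_apply] at hd
      by_cases hm1 : M.Adj u v <;> by_cases hm2 : M.Adj x y
      · have s1 := fmatch u v hm1
        have s2 := fmatch x y hm2
        rcases g2L1 n (f u) (f v) (f x) (f y) h4 hn4 s1 s2 hd with ⟨e1, e2⟩ | ⟨e1, e2⟩
        · rw [finj e1, finj e2]
        · rw [finj e1, finj e2, Sym2.eq_swap]
      · exact absurd hd
          (g2L2 n (f u) (f v) (f x) (f y) h4 hn4 (fmatch u v hm1) (fbd' x) (fbd' y)
            (hNM x y hxy hm2))
      · exact absurd hd.symm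
          (g2L2 n (f x) (f y) (f u) (f v) h4 hn4 (fmatch x y hm2) (fbd' u) (fbd' v)
            (hNM u v huv hm1))
      · have e : Nat.dist (f u) (f v) = Nat.dist (f x) (f y) := by
          rw [← g2L3 n (f u) (f v) h4 (fbd' u) (fbd' v) (hNM u v huv hm1),
            ← g2L3 n (f x) (f y) h4 (fbd' x) (fbd' y) (hNM x y hxy hm2)]
          exact hd
        exact fdist u v x y huv hxy e
    · -- matching sum
      intro x y hxy
      simp only [Function.comp_apply, ← hn]
      exact g2L4 n (f x) (f y) h4 hn4 (fmatch x y hxy)
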